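/- arXiv:2103.09731 — 2 statements merged into one kernel-verified Lean document; each statement's English description precedes it below -/
import Mathlib

section
/- Let G be a connected weighted graph, s,t vertices, and ε > 0. Let H₀ be a subgraph of G with d_{H₀}(s,t) > d_G(s,t) + (6+ε)·W(s,t), and let H₁ be H₀ together with all edges of π(s,t). Let u, y, v be vertices appearing in this order along π(s,t) with d_{H₀}(s,u) = d_G(s,u) and d_{H₀}(v,t) = d_G(v,t); let a be a vertex joined in H₀ to u by an edge of weight at most W(s,t), let b be a vertex joined in H₀ to v by an edge of weight at most W(s,t), and let x be a vertex joined in H₀ to y by an edge of weight at most W(s,t). Then: (1) d_{H₁}(a,x) ≤ d_G(a,x) + 4·W(s,t) and d_{H₁}(x,b) ≤ d_G(x,b) + 4·W(s,t); and (2) d_{H₀}(a,x) − d_{H₁}(a,x) > ε·W(s,t)/2 or d_{H₀}(x,b) − d_{H₁}(x,b) > ε·W(s,t)/2. -/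
open scoped ENNReal Classical

/-- The total weight of a walk: the sum of the weights of its edges. -/
noncomputable def walkWeight {V : Type} (G : SimpleGraph V) (w : Sym2 V → ℝ≥0∞)
    {s t : V} (p : G.Walk s t) : ℝ≥0∞ :=
  (p.edges.map w).sum

/-- Shortest-path distance in the weighted graph `(G, w)`, equal to `⊤` if there is no path. -/
noncomputable def gdist {V : Type} (G : SimpleGraph V) (w : Sym2 V → ℝ≥0∞)
    (s t : V) : ℝ≥0∞ :=
  ⨅ p : G.Walk s t, walkWeight G w p

/-- The maximum edge weight along a walk (0 for the trivial walk). -/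
noncomputable def maxEdge {V : Type} (G : SimpleGraph V) (w : Sym2 V → ℝ≥0∞)
    {s t : V} (p : G.Walk s t) : ℝ≥0∞ :=
  (p.edges.map w).foldr max 0

/-- `π` assigns to each ordered vertex pair a shortest path: a walk whose total
weight equals the shortest-path distance. -/
def IsShortestPathScheme {V : Type} (G : SimpleGraph V) (w : Sym2 V → ℝ≥0∞)
    (π : (s t : V) → G.Walk s t) : Prop :=
  ∀ s t : V, walkWeight G w (π s t) = gdist G w s t

/-- The edge weights are positive and finite on all edges of `G`. -/
def PosWeights {V : Type} (G : SimpleGraph V) (w : Sym2 V → ℝ≥0∞) : Prop :=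
  ∀ e ∈ G.edgeSet, 0 < w e ∧ w e ≠ ⊤

section Helpers

variable {V : Type} {G H : SimpleGraph V} {w : Sym2 V → ℝ≥0∞} {s m t a b : V}

lemma gdist_le (p : G.Walk s t) : gdist G w s t ≤ walkWeight G w p := iInf_le _ p

lemma walkWeight_append (p : G.Walk s m) (q : G.Walk m t) :
    walkWeight G w (p.append q) = walkWeight G w p + walkWeight G w q := by
  simp [walkWeight]

lemma gdist_triangle (G : SimpleGraph V) (w : Sym2 V → ℝ≥0∞) (a b c : V) :
    gdist G w a c ≤ gdist G w a b + gdist G w b c := by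
  have h : gdist G w a b + gdist G w b c
      = ⨅ p : G.Walk a b, ⨅ q : G.Walk b c, (walkWeight G w p + walkWeight G w q) := by
    rw [gdist, gdist, ENNReal.iInf_add]
    exact iInf_congr fun p => ENNReal.add_iInf
  rw [h]
  exact le_iInf fun p => le_iInf fun q =>
    (walkWeight_append p q) ▸ gdist_le (p.append q)

lemma gdist_le_of_edges_mem (p : G.Walk s t) (h : ∀ e ∈ p.edges, e ∈ H.edgeSet) :
    gdist H w s t ≤ walkWeight G w p := by
  have h1 := gdist_le (w := w) (p.transfer H h)
  have h2 : walkWeight H w (p.transfer H h) = walkWeight G w p := by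
    simp [walkWeight, SimpleGraph.Walk.edges_transfer]
  rwa [h2] at h1

lemma gdist_le_adj (h : H.Adj a b) : gdist H w a b ≤ w s(a, b) := by
  have := gdist_le (w := w) (SimpleGraph.Walk.cons h SimpleGraph.Walk.nil)
  simpa [walkWeight] using this

lemma walkWeight_ne_top (hw : PosWeights G w) (p : G.Walk s t) :
    walkWeight G w p ≠ ⊤ := by
  induction p with
  | nil => simp [walkWeight]
  | cons h p ih =>
      rw [walkWeight] at ih ⊢
      simp only [SimpleGraph.Walk.edges_cons, List.map_cons, List.sum_cons]
      exact ENNReal.add_ne_top.2 ⟨(hw _ (G.mem_edgeSet.2 h)).2, ih⟩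

end Helpers

/-- Set-off/improvement lemma for `+(6+ε)W(·,·)` spanner completion.
`H₀` is a subgraph still violating the `+(6+ε)W(s,t)` bound for `(s,t)`, `H₁` is `H₀`
plus all edges of `π(s,t)`; `u, y, v` appear in this order along `π(s,t)`, with `s`–`u` and
`v`–`t` distances already exact in `H₀`; `a`, `x`, `b` are joined in `H₀` to `u`, `y`, `v`
respectively by edges of weight at most `W(s,t)`. Then the pairs `(a,x)` and `(x,b)` are set
off in `H₁`, and at least one of them improves by more than `ε·W(s,t)/2`. -/
theorem improvements_six_plus_eps
    (V : Type) [Fintype V] (G : SimpleGraph V) (w : Sym2 V → ℝ≥0∞)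
    (hconn : G.Connected) (hw : PosWeights G w)
    (π : (s t : V) → G.Walk s t) (hπ : IsShortestPathScheme G w π)
    (s t : V) (ε : ℝ) (hε : 0 < ε)
    (H₀ H₁ : SimpleGraph V) (hH₀ : H₀ ≤ G)
    (hviol : gdist H₀ w s t >
      gdist G w s t + ENNReal.ofReal (6 + ε) * maxEdge G w (π s t))
    (hH₁ : H₁ = H₀ ⊔ SimpleGraph.fromEdgeSet {e | e ∈ (π s t).edges})
    (u y v a x b : V)
    (p₁ : G.Walk s u) (p₂ : G.Walk u y) (p₃ : G.Walk y v) (p₄ : G.Walk v t)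
    (horder : π s t = p₁.append (p₂.append (p₃.append p₄)))
    (hsu : gdist H₀ w s u = gdist G w s u)
    (hvt : gdist H₀ w v t = gdist G w v t)
    (ha : H₀.Adj a u ∧ w s(a, u) ≤ maxEdge G w (π s t))
    (hb : H₀.Adj b v ∧ w s(b, v) ≤ maxEdge G w (π s t))
    (hx : H₀.Adj x y ∧ w s(x, y) ≤ maxEdge G w (π s t)) :
    (gdist H₁ w a x ≤ gdist G w a x + 4 * maxEdge G w (π s t) ∧
      gdist H₁ w x b ≤ gdist G w x b + 4 * maxEdge G w (π s t)) ∧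
    (gdist H₀ w a x - gdist H₁ w a x > ENNReal.ofReal (ε / 2) * maxEdge G w (π s t) ∨
      gdist H₀ w x b - gdist H₁ w x b > ENNReal.ofReal (ε / 2) * maxEdge G w (π s t)) := by
  set W := maxEdge G w (π s t) with hW
  set A := walkWeight G w p₁ with hA
  set B := walkWeight G w p₂ with hBB
  set C := walkWeight G w p₃ with hC
  set D := walkWeight G w p₄ with hD
  have hH01 : H₀ ≤ H₁ := hH₁ ▸ le_sup_left
  -- all edges of π are edges of H₁
  have hπedge : ∀ e ∈ (π s t).edges, e ∈ H₁.edgeSet := by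
    intro e he
    rw [hH₁, SimpleGraph.edgeSet_sup]
    right
    rw [SimpleGraph.edgeSet_fromEdgeSet]
    exact ⟨he, G.not_isDiag_of_mem_edgeSet ((π s t).edges_subset_edgeSet he)⟩
  -- edges of the subwalks are edges of π
  have hmem2 : ∀ e ∈ p₂.edges, e ∈ (π s t).edges := by
    intro e he; rw [horder]; simp [SimpleGraph.Walk.edges_append]; tauto
  have hmem3 : ∀ e ∈ p₃.edges, e ∈ (π s t).edges := by
    intro e he; rw [horder]; simp [SimpleGraph.Walk.edges_append]; tauto
  -- distances in H₁ along the middle subwalks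
  have hB1 : gdist H₁ w u y ≤ B :=
    gdist_le_of_edges_mem p₂ fun e he => hπedge e (hmem2 e he)
  have hC1 : gdist H₁ w y v ≤ C :=
    gdist_le_of_edges_mem p₃ fun e he => hπedge e (hmem3 e he)
  -- edge distances
  have hswap_au : (s(u, a) : Sym2 V) = s(a, u) := Sym2.eq_swap
  have hswap_xy : (s(y, x) : Sym2 V) = s(x, y) := Sym2.eq_swap
  have hswap_bv : (s(v, b) : Sym2 V) = s(b, v) := Sym2.eq_swap
  have e1H₁ : gdist H₁ w a u ≤ W := le_trans (gdist_le_adj (hH01 ha.1)) ha.2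
  have e1H₁' : gdist H₁ w u a ≤ W :=
    le_trans (gdist_le_adj (hH01 ha.1).symm) (hswap_au ▸ ha.2)
  have e2H₁ : gdist H₁ w x y ≤ W := le_trans (gdist_le_adj (hH01 hx.1)) hx.2
  have e2H₁' : gdist H₁ w y x ≤ W :=
    le_trans (gdist_le_adj (hH01 hx.1).symm) (hswap_xy ▸ hx.2)
  have e3H₁ : gdist H₁ w b v ≤ W := le_trans (gdist_le_adj (hH01 hb.1)) hb.2
  have e3H₁' : gdist H₁ w v b ≤ W :=
    le_trans (gdist_le_adj (hH01 hb.1).symm) (hswap_bv ▸ hb.2)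
  -- d_{H₁}(a,x) ≤ W + (B + W)
  have d1ax : gdist H₁ w a x ≤ W + (B + W) :=
    calc gdist H₁ w a x ≤ gdist H₁ w a u + gdist H₁ w u x := gdist_triangle _ _ _ _ _
      _ ≤ gdist H₁ w a u + (gdist H₁ w u y + gdist H₁ w y x) :=
          add_le_add_right (gdist_triangle _ _ _ _ _) _
      _ ≤ W + (B + W) := add_le_add e1H₁ (add_le_add hB1 e2H₁')
  have d1xb : gdist H₁ w x b ≤ W + (C + W) :=
    calc gdist H₁ w x b ≤ gdist H₁ w x y + gdist H₁ w y b := gdist_triangle _ _ _ _ _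
      _ ≤ gdist H₁ w x y + (gdist H₁ w y v + gdist H₁ w v b) :=
          add_le_add_right (gdist_triangle _ _ _ _ _) _
      _ ≤ W + (C + W) := add_le_add e2H₁ (add_le_add hC1 e3H₁')
  -- finiteness of subwalk weights in G
  have hAne : A ≠ ⊤ := walkWeight_ne_top hw p₁
  have hBne : B ≠ ⊤ := walkWeight_ne_top hw p₂
  have hCne : C ≠ ⊤ := walkWeight_ne_top hw p₃
  have hDne : D ≠ ⊤ := walkWeight_ne_top hw p₄
  -- the total weight of π
  have hst : gdist G w s t = A + (B + (C + D)) := by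
    rw [← hπ s t, horder, walkWeight_append, walkWeight_append, walkWeight_append]
  have g1A : gdist G w s u ≤ A := gdist_le p₁
  have g2B : gdist G w u y ≤ B := gdist_le p₂
  have g3C : gdist G w y v ≤ C := gdist_le p₃
  have g4D : gdist G w v t ≤ D := gdist_le p₄
  have tri4 : gdist G w s t ≤
      gdist G w s u + (gdist G w u y + (gdist G w y v + gdist G w v t)) :=
    calc gdist G w s t ≤ gdist G w s u + gdist G w u t := gdist_triangle _ _ _ _ _
      _ ≤ gdist G w s u + (gdist G w u y + gdist G w y t) :=
          add_le_add_right (gdist_triangle _ _ _ _ _) _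
      _ ≤ gdist G w s u + (gdist G w u y + (gdist G w y v + gdist G w v t)) :=
          add_le_add_right (add_le_add_right (gdist_triangle _ _ _ _ _) _) _
  -- B ≤ d_G(u,y)
  have hBg : B ≤ gdist G w u y := by
    have key : A + (B + (C + D)) ≤ A + (gdist G w u y + (C + D)) :=
      calc A + (B + (C + D)) = gdist G w s t := hst.symm
        _ ≤ gdist G w s u + (gdist G w u y + (gdist G w y v + gdist G w v t)) := tri4
        _ ≤ A + (gdist G w u y + (C + D)) :=
            add_le_add g1A (add_le_add_right (add_le_add g3C g4D) _)
    have key2 : B + (C + D) ≤ gdist G w u y + (C + D) :=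
      (ENNReal.add_le_add_iff_left hAne).1 key
    exact (ENNReal.add_le_add_iff_right (ENNReal.add_ne_top.2 ⟨hCne, hDne⟩)).1 key2
  -- C ≤ d_G(y,v)
  have hCg : C ≤ gdist G w y v := by
    have key : A + (B + (C + D)) ≤ A + (B + (gdist G w y v + D)) :=
      calc A + (B + (C + D)) = gdist G w s t := hst.symm
        _ ≤ gdist G w s u + (gdist G w u y + (gdist G w y v + gdist G w v t)) := tri4
        _ ≤ A + (B + (gdist G w y v + D)) :=
            add_le_add g1A (add_le_add g2B (add_le_add_right g4D _))
    have key2 : C + D ≤ gdist G w y v + D :=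
      (ENNReal.add_le_add_iff_left hBne).1 ((ENNReal.add_le_add_iff_left hAne).1 key)
    exact (ENNReal.add_le_add_iff_right hDne).1 key2
  -- triangle inequalities in G for u-y and y-v through a,x,b
  have e1G : gdist G w u a ≤ W := le_trans (gdist_le_adj (hH₀ ha.1).symm) (hswap_au ▸ ha.2)
  have e2G : gdist G w x y ≤ W := le_trans (gdist_le_adj (hH₀ hx.1)) hx.2
  have e2G' : gdist G w y x ≤ W := le_trans (gdist_le_adj (hH₀ hx.1).symm) (hswap_xy ▸ hx.2)
  have e3G : gdist G w b v ≤ W := le_trans (gdist_le_adj (hH₀ hb.1)) hb.2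
  have hBbound : B ≤ W + (gdist G w a x + W) :=
    calc B ≤ gdist G w u y := hBg
      _ ≤ gdist G w u a + gdist G w a y := gdist_triangle _ _ _ _ _
      _ ≤ gdist G w u a + (gdist G w a x + gdist G w x y) :=
          add_le_add_right (gdist_triangle _ _ _ _ _) _
      _ ≤ W + (gdist G w a x + W) := add_le_add e1G (add_le_add_right e2G _)
  have hCbound : C ≤ W + (gdist G w x b + W) :=
    calc C ≤ gdist G w y v := hCg
      _ ≤ gdist G w y x + gdist G w x v := gdist_triangle _ _ _ _ _
      _ ≤ gdist G w y x + (gdist G w x b + gdist G w b v) :=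
          add_le_add_right (gdist_triangle _ _ _ _ _) _
      _ ≤ W + (gdist G w x b + W) := add_le_add e2G' (add_le_add_right e3G _)
  -- Part (1)
  have part1a : gdist H₁ w a x ≤ gdist G w a x + 4 * W :=
    calc gdist H₁ w a x ≤ W + (B + W) := d1ax
      _ ≤ W + ((W + (gdist G w a x + W)) + W) := add_le_add_right (add_le_add_left hBbound _) _
      _ = gdist G w a x + 4 * W := by ring
  have part1b : gdist H₁ w x b ≤ gdist G w x b + 4 * W :=
    calc gdist H₁ w x b ≤ W + (C + W) := d1xb
      _ ≤ W + ((W + (gdist G w x b + W)) + W) := add_le_add_right (add_le_add_left hCbound _) _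
      _ = gdist G w x b + 4 * W := by ring
  refine ⟨⟨part1a, part1b⟩, ?_⟩
  -- Part (2): by contradiction
  by_contra hcon
  push_neg at hcon
  obtain ⟨hcon1, hcon2⟩ := hcon
  set c := ENNReal.ofReal (ε / 2) * W with hc
  have d0ax : gdist H₀ w a x ≤ c + (W + (B + W)) :=
    le_trans (tsub_le_iff_right.1 hcon1 : gdist H₀ w a x ≤ c + gdist H₁ w a x)
      (add_le_add_right d1ax _)
  have d0xb : gdist H₀ w x b ≤ c + (W + (C + W)) :=
    le_trans (tsub_le_iff_right.1 hcon2 : gdist H₀ w x b ≤ c + gdist H₁ w x b)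
      (add_le_add_right d1xb _)
  have e1H₀ : gdist H₀ w u a ≤ W := le_trans (gdist_le_adj ha.1.symm) (hswap_au ▸ ha.2)
  have e3H₀ : gdist H₀ w b v ≤ W := le_trans (gdist_le_adj hb.1) hb.2
  have T : gdist H₀ w s t ≤ gdist H₀ w s u + (gdist H₀ w u a + (gdist H₀ w a x +
      (gdist H₀ w x b + (gdist H₀ w b v + gdist H₀ w v t)))) :=
    calc gdist H₀ w s t ≤ gdist H₀ w s u + gdist H₀ w u t := gdist_triangle _ _ _ _ _
      _ ≤ gdist H₀ w s u + (gdist H₀ w u a + gdist H₀ w a t) :=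
          add_le_add_right (gdist_triangle _ _ _ _ _) _
      _ ≤ gdist H₀ w s u + (gdist H₀ w u a + (gdist H₀ w a x + gdist H₀ w x t)) :=
          add_le_add_right (add_le_add_right (gdist_triangle _ _ _ _ _) _) _
      _ ≤ gdist H₀ w s u + (gdist H₀ w u a + (gdist H₀ w a x +
            (gdist H₀ w x b + gdist H₀ w b t))) :=
          add_le_add_right (add_le_add_right (add_le_add_right (gdist_triangle _ _ _ _ _) _) _) _
      _ ≤ gdist H₀ w s u + (gdist H₀ w u a + (gdist H₀ w a x +
            (gdist H₀ w x b + (gdist H₀ w b v + gdist H₀ w v t)))) :=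
          add_le_add_right (add_le_add_right (add_le_add_right (add_le_add_right
            (gdist_triangle _ _ _ _ _) _) _) _) _
  have hsu' : gdist H₀ w s u ≤ A := hsu ▸ g1A
  have hvt' : gdist H₀ w v t ≤ D := hvt ▸ g4D
  have final : gdist H₀ w s t ≤ gdist G w s t + ENNReal.ofReal (6 + ε) * W := by
    have hcc : c + c = ENNReal.ofReal ε * W := by
      rw [hc, ← add_mul, ← ENNReal.ofReal_add (by linarith) (by linarith)]
      norm_num
    have h6ε : ENNReal.ofReal (6 + ε) * W = 6 * W + ENNReal.ofReal ε * W := by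
      rw [ENNReal.ofReal_add (by norm_num) hε.le, add_mul]
      norm_num
    calc gdist H₀ w s t ≤ gdist H₀ w s u + (gdist H₀ w u a + (gdist H₀ w a x +
          (gdist H₀ w x b + (gdist H₀ w b v + gdist H₀ w v t)))) := T
      _ ≤ A + (W + ((c + (W + (B + W))) + ((c + (W + (C + W))) + (W + D)))) :=
          add_le_add hsu' (add_le_add e1H₀ (add_le_add d0ax (add_le_add d0xb
            (add_le_add e3H₀ hvt'))))
      _ = (A + (B + (C + D))) + (6 * W + (c + c)) := by ring
      _ = gdist G w s t + ENNReal.ofReal (6 + ε) * W := by rw [hcc, ← h6ε, hst]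
  exact (not_lt.2 final) hviol
end

section
/- Let H be a d-lightweight initialization of the subdivided graph G′, and let e = uv be an edge of G′ not contained in H. Then there exist at least c·d^{1/2} vertices x of G′ (for a universal constant c > 0) with d_H(u,x) ≤ w(e). Moreover, for every ε′ ∈ (0,1] there exist at least ε′·w(e)/2 vertices x of G′ with d_H(u,x) ≤ ε′·w(e). -/
open scoped ENNReal Classical

/-- `H` is a `d`-lightweight initialization of `(G', w)` relative to a spanning tree `T`
(the MST of the subdivided graph), witnessed by the selection `S`: starting from `T`, for
each vertex `v` the non-tree edges incident to `v` are added one by one in nondecreasing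
order of weight for as long as the total weight added for `v` remains at most `d`. -/
def IsDLightweightInit {V : Type} [Fintype V] (G' T : SimpleGraph V) (w : Sym2 V → ℝ≥0∞)
    (d : ℝ) (H : SimpleGraph V) (S : V → Finset V) : Prop :=
  (∀ v : V, ∀ u ∈ S v, G'.Adj v u ∧ ¬ T.Adj v u) ∧
  (∀ v : V, ∑ u ∈ S v, w s(v, u) ≤ ENNReal.ofReal d) ∧
  (∀ v u : V, G'.Adj v u → ¬ T.Adj v u → u ∉ S v →
      (∀ x ∈ S v, w s(v, x) ≤ w s(v, u)) ∧
      ENNReal.ofReal d < (∑ x ∈ S v, w s(v, x)) + w s(v, u)) ∧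
  (∀ a b : V, H.Adj a b ↔ T.Adj a b ∨ (G'.Adj a b ∧ (b ∈ S a ∨ a ∈ S b)))

/-- `(G', w)` models the subdivided graph of the lightweight-spanner construction: it is
connected with positive finite edge weights, every edge has weight less than the number of
vertices (edges of weight ≥ n were removed and subdividing only adds vertices), and `T` is
a spanning tree of `G'` (the subdivided MST) all of whose edges have weight at most `1`. -/
def IsSubdividedSetting {V : Type} [Fintype V] (G' T : SimpleGraph V)
    (w : Sym2 V → ℝ≥0∞) : Prop :=
  G'.Connected ∧ PosWeights G' w ∧
  (∀ e ∈ G'.edgeSet, w e < (Fintype.card V : ℝ≥0∞)) ∧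
  T ≤ G' ∧ T.Connected ∧ T.IsAcyclic ∧
  (∀ e ∈ T.edgeSet, w e ≤ 1)

section Aux

open SimpleGraph Finset

variable {V : Type}

lemma gdist_le_walk {G : SimpleGraph V} (w : Sym2 V → ℝ≥0∞) {s t : V} (p : G.Walk s t) :
    gdist G w s t ≤ walkWeight G w p := iInf_le _ p

lemma gdist_self {G : SimpleGraph V} (w : Sym2 V → ℝ≥0∞) (u : V) :
    gdist G w u u = 0 :=
  le_antisymm ((gdist_le_walk w SimpleGraph.Walk.nil).trans_eq (by simp [walkWeight]))
    zero_le

lemma gdist_le_of_adj {G : SimpleGraph V} (w : Sym2 V → ℝ≥0∞) {s t : V} (h : G.Adj s t) :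
    gdist G w s t ≤ w s(s, t) :=
  (gdist_le_walk w (SimpleGraph.Walk.cons h SimpleGraph.Walk.nil)).trans_eq (by simp [walkWeight])

lemma gdist_triangle_adj {G : SimpleGraph V} (w : Sym2 V → ℝ≥0∞) {u x y : V}
    (h : G.Adj x y) :
    gdist G w u y ≤ gdist G w u x + w s(x, y) := by
  have heq : gdist G w u x + w s(x, y) = ⨅ p : G.Walk u x, (walkWeight G w p + w s(x, y)) :=
    ENNReal.iInf_add
  rw [heq]
  refine le_iInf fun p => ?_
  calc gdist G w u y ≤ walkWeight G w (p.append (SimpleGraph.Walk.cons h SimpleGraph.Walk.nil)) :=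
        gdist_le_walk w _
    _ = walkWeight G w p + w s(x, y) := by
        simp [walkWeight, SimpleGraph.Walk.edges_append]

lemma gdist_anti {G H : SimpleGraph V} (hGH : G ≤ H) (w : Sym2 V → ℝ≥0∞) (s t : V) :
    gdist H w s t ≤ gdist G w s t := by
  refine le_iInf fun p => ?_
  have hp : ∀ e ∈ p.edges, e ∈ H.edgeSet := fun e he =>
    SimpleGraph.edgeSet_mono hGH (p.edges_subset_edgeSet he)
  calc gdist H w s t ≤ walkWeight H w (p.transfer H hp) := gdist_le_walk w _
    _ = walkWeight G w p := by simp [walkWeight, SimpleGraph.Walk.edges_transfer]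

lemma exists_crossing {G : SimpleGraph V} {s : Set V} :
    ∀ {a b : V} (_ : G.Walk a b), a ∈ s → b ∉ s → ∃ x ∈ s, ∃ y, y ∉ s ∧ G.Adj x y
  | _, _, SimpleGraph.Walk.nil, ha, hb => absurd ha hb
  | a, _, @SimpleGraph.Walk.cons _ _ _ c _ h p, ha, hb => by
    by_cases hc : c ∈ s
    · exact exists_crossing p hc hb
    · exact ⟨a, ha, c, hc, h⟩

variable [Fintype V]

lemma ball_card {T : SimpleGraph V} {w : Sym2 V → ℝ≥0∞} (hconn : T.Connected)
    (hw1 : ∀ e ∈ T.edgeSet, w e ≤ 1) (u : V) (k : ℕ) :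
    min (Fintype.card V) (k + 1) ≤
      (Finset.univ.filter (fun x => gdist T w u x ≤ (k : ℝ≥0∞))).card := by
  induction k with
  | zero =>
    have hu : u ∈ Finset.univ.filter (fun x => gdist T w u x ≤ ((0 : ℕ) : ℝ≥0∞)) := by
      simp [gdist_self]
    have := Finset.card_pos.mpr ⟨u, hu⟩
    omega
  | succ k ih =>
    set B := Finset.univ.filter (fun x => gdist T w u x ≤ (k : ℝ≥0∞)) with hB
    set B' := Finset.univ.filter (fun x => gdist T w u x ≤ ((k + 1 : ℕ) : ℝ≥0∞)) with hB'
    have hBB' : B ⊆ B' := by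
      intro x hx
      simp only [hB, hB', Finset.mem_filter, Finset.mem_univ, true_and] at hx ⊢
      exact hx.trans (by exact_mod_cast Nat.cast_le.mpr (Nat.le_succ k))
    by_cases hfull : B = Finset.univ
    · have := Finset.card_le_card hBB'
      rw [hfull, Finset.card_univ] at this
      omega
    · obtain ⟨b, hb⟩ : ∃ b, b ∉ B := by
        by_contra hcon
        push_neg at hcon
        exact hfull (Finset.eq_univ_of_forall hcon)
      have hu : u ∈ B := by simp [hB, gdist_self]
      obtain ⟨p⟩ := hconn.preconnected u b
      obtain ⟨x, hx, y, hy, hxy⟩ :=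
        exists_crossing (s := fun z => z ∈ B) p hu hb
      have hyB' : y ∈ B' := by
        simp only [hB, Finset.mem_filter, Finset.mem_univ, true_and] at hx
        have h1 : gdist T w u y ≤ gdist T w u x + w s(x, y) := gdist_triangle_adj w hxy
        have h2 : w s(x, y) ≤ 1 := hw1 _ hxy
        have : gdist T w u y ≤ (k : ℝ≥0∞) + 1 := h1.trans (add_le_add hx h2)
        simp only [hB', Finset.mem_filter, Finset.mem_univ, true_and]
        exact this.trans_eq (by push_cast; ring)
      have hlt : B.card < B'.card :=
        Finset.card_lt_card (Finset.ssubset_iff_of_subset hBB' |>.mpr ⟨y, hyB', hy⟩)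
      omega

lemma ball_card_real {T H : SimpleGraph V} {w : Sym2 V → ℝ≥0∞} (hconn : T.Connected)
    (hw1 : ∀ e ∈ T.edgeSet, w e ≤ 1) (hTH : T ≤ H) (u : V) (r : ℝ) (hr : 0 ≤ r) :
    min (Fintype.card V) (⌊r⌋₊ + 1) ≤
      (Finset.univ.filter (fun x => gdist H w u x ≤ ENNReal.ofReal r)).card := by
  refine (ball_card hconn hw1 u ⌊r⌋₊).trans (Finset.card_le_card ?_)
  intro x hx
  simp only [Finset.mem_filter, Finset.mem_univ, true_and] at hx ⊢
  refine (gdist_anti hTH w u x).trans (hx.trans ?_)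
  rw [← ENNReal.ofReal_natCast]
  exact ENNReal.ofReal_le_ofReal (Nat.floor_le hr)

end Aux

/-- Let `H` be a `d`-lightweight initialization of the subdivided graph
`G'`, and let `e = uv` be an edge of `G'` not contained in `H`. Then there are at least
`c·√d` vertices `x` (for a universal constant `c > 0`) with `d_H(u,x) ≤ w(e)`; moreover,
for every `ε' ∈ (0,1]` there are at least `ε'·w(e)/2` vertices `x` with
`d_H(u,x) ≤ ε'·w(e)`. -/
theorem lightweight_init_neighborhood :
    ∃ c : ℝ, 0 < c ∧
      ∀ (V : Type) [Fintype V] (G' T : SimpleGraph V) (w : Sym2 V → ℝ≥0∞),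
        IsSubdividedSetting G' T w →
        ∀ (d : ℝ), 0 ≤ d →
        ∀ (H : SimpleGraph V) (S : V → Finset V), IsDLightweightInit G' T w d H S →
        ∀ u v : V, G'.Adj u v → ¬ H.Adj u v →
          (∃ N : Finset V, ENNReal.ofReal (c * Real.sqrt d) ≤ (N.card : ℝ≥0∞) ∧
            ∀ x ∈ N, gdist H w u x ≤ w s(u, v)) ∧
          ∀ ε' : ℝ, 0 < ε' → ε' ≤ 1 →
            ∃ N : Finset V, ENNReal.ofReal ε' * w s(u, v) / 2 ≤ (N.card : ℝ≥0∞) ∧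
              ∀ x ∈ N, gdist H w u x ≤ ENNReal.ofReal ε' * w s(u, v) := by
  refine ⟨1, one_pos, ?_⟩
  intro V _ G' T w hsetting d hd H S hinit u v huv hHuv
  obtain ⟨hconn, hpos, hlt, hTG, hTconn, hTac, hw1⟩ := hsetting
  obtain ⟨hS1, hS2, hS3, hadj⟩ := hinit
  have hTH : T ≤ H := fun {a b} hab => (hadj a b).mpr (Or.inl hab)
  have hnotT : ¬ T.Adj u v := fun h => hHuv ((hadj u v).mpr (Or.inl h))
  have hvS : v ∉ S u := fun h => hHuv ((hadj u v).mpr (Or.inr ⟨huv, Or.inl h⟩))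
  obtain ⟨hmax, hsum⟩ := hS3 u v huv hnotT hvS
  have hmem : s(u, v) ∈ G'.edgeSet := huv
  have hwfin : w s(u, v) ≠ ⊤ := (hpos _ hmem).2
  set W := (w s(u, v)).toReal with hWdef
  have hWw : w s(u, v) = ENNReal.ofReal W := (ENNReal.ofReal_toReal hwfin).symm
  have hW0 : 0 ≤ W := ENNReal.toReal_nonneg
  have hWn : W < (Fintype.card V : ℝ) := by
    have h2 : (w s(u, v)).toReal < ((Fintype.card V : ℝ≥0∞)).toReal :=
      ENNReal.toReal_strict_mono (by simp) (hlt _ hmem)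
    simpa using h2
  constructor
  · -- first part
    by_cases hcase : Real.sqrt d ≤ W
    · refine ⟨Finset.univ.filter (fun x => gdist H w u x ≤ w s(u, v)), ?_, ?_⟩
      · have hball := ball_card_real hTconn hw1 hTH u W hW0
        rw [← hWw] at hball
        have h1 : Real.sqrt d ≤ ((min (Fintype.card V) (⌊W⌋₊ + 1) : ℕ) : ℝ) := by
          push_cast
          refine le_min (hcase.trans hWn.le) (hcase.trans ?_)
          have h3 := Nat.lt_floor_add_one W
          push_cast at h3 ⊢
          linarith
        calc ENNReal.ofReal (1 * Real.sqrt d) = ENNReal.ofReal (Real.sqrt d) := by rw [one_mul]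
          _ ≤ ((min (Fintype.card V) (⌊W⌋₊ + 1) : ℕ) : ℝ≥0∞) := by
              rw [← ENNReal.ofReal_natCast]; exact ENNReal.ofReal_le_ofReal h1
          _ ≤ _ := Nat.cast_le.mpr hball
      · intro x hx; exact (Finset.mem_filter.mp hx).2
    · push_neg at hcase
      refine ⟨insert u (S u), ?_, ?_⟩
      · have huS : u ∉ S u := fun h => (G'.irrefl (hS1 u u h).1)
        rw [Finset.card_insert_of_notMem huS]
        by_cases hd1 : Real.sqrt d ≤ 1
        · calc ENNReal.ofReal (1 * Real.sqrt d) ≤ 1 := by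
                rw [one_mul]; exact ENNReal.ofReal_le_one.mpr hd1
            _ ≤ _ := by exact_mod_cast Nat.cast_le.mpr (by omega : 1 ≤ (S u).card + 1)
        · push_neg at hd1
          have hsd : (0 : ℝ) < Real.sqrt d := lt_trans one_pos hd1
          have hkey : ENNReal.ofReal d < (((S u).card + 1 : ℕ) : ℝ≥0∞) * w s(u, v) := by
            refine hsum.trans_le ?_
            have hs : ∑ x ∈ S u, w s(u, x) ≤ (S u).card • w s(u, v) :=
              Finset.sum_le_card_nsmul _ _ _ (fun x hx => hmax x hx)
            rw [nsmul_eq_mul] at hs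
            calc (∑ x ∈ S u, w s(u, x)) + w s(u, v)
                ≤ ((S u).card : ℝ≥0∞) * w s(u, v) + w s(u, v) := add_le_add_left hs _
              _ = (((S u).card + 1 : ℕ) : ℝ≥0∞) * w s(u, v) := by push_cast; ring
          have hwlt : w s(u, v) < ENNReal.ofReal (Real.sqrt d) := by
            rw [hWw]; exact (ENNReal.ofReal_lt_ofReal_iff hsd).mpr hcase
          have hdlt : ENNReal.ofReal (Real.sqrt d) * ENNReal.ofReal (Real.sqrt d) <
              (((S u).card + 1 : ℕ) : ℝ≥0∞) * ENNReal.ofReal (Real.sqrt d) := by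
            rw [← ENNReal.ofReal_mul (Real.sqrt_nonneg d), Real.mul_self_sqrt hd]
            exact hkey.trans_le (mul_le_mul_right hwlt.le _)
          have hres := (ENNReal.mul_lt_mul_iff_left (ne_of_gt (ENNReal.ofReal_pos.mpr hsd))
            ENNReal.ofReal_ne_top).mp hdlt
          rw [one_mul]
          exact_mod_cast hres.le
      · intro x hx
        rcases Finset.mem_insert.mp hx with rfl | hxS
        · rw [gdist_self]; exact zero_le
        · have hHux : H.Adj u x := (hadj u x).mpr (Or.inr ⟨(hS1 u x hxS).1, Or.inl hxS⟩)
          exact (gdist_le_of_adj w hHux).trans (hmax x hxS)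
  · intro ε' hε0 hε1
    set r := ε' * W with hrdef
    have hr0 : 0 ≤ r := mul_nonneg hε0.le hW0
    have hre : ENNReal.ofReal ε' * w s(u, v) = ENNReal.ofReal r := by
      rw [hWw, ← ENNReal.ofReal_mul hε0.le]
    refine ⟨Finset.univ.filter (fun x => gdist H w u x ≤ ENNReal.ofReal r), ?_, ?_⟩
    · have hball := ball_card_real hTconn hw1 hTH u r hr0
      have hrW : r ≤ W := by nlinarith
      have h1 : r / 2 ≤ ((min (Fintype.card V) (⌊r⌋₊ + 1) : ℕ) : ℝ) := by
        push_cast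
        refine le_min (by linarith) ?_
        have h3 := Nat.lt_floor_add_one r
        push_cast at h3 ⊢
        linarith
      rw [hre]
      calc ENNReal.ofReal r / 2 = ENNReal.ofReal (r / 2) := by
            rw [ENNReal.ofReal_div_of_pos two_pos]; norm_num
        _ ≤ ((min (Fintype.card V) (⌊r⌋₊ + 1) : ℕ) : ℝ≥0∞) := by
            rw [← ENNReal.ofReal_natCast]; exact ENNReal.ofReal_le_ofReal h1
        _ ≤ _ := Nat.cast_le.mpr hball
    · intro x hx
      rw [hre]; exact (Finset.mem_filter.mp hx).2
end
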